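/- Let N be a normal subgroup of a group G. There is a group isomorphism φ from Z¹(G/N, Z(N)) to C_{Aut(G)}(G/N, N) given by g^{φ(f)} = g·f(gN), and the image of B¹(G/N, Z(N)) under φ is the group of inner automorphisms of G induced by elements of Z(N). -/

import Mathlib

set_option linter.unusedSectionVars false

namespace Stmt14Aux

variable {G : Type*} [Group G] (N : Subgroup G) [N.Normal]

/-- Derivations `G/N → Z(N)`. -/
abbrev Der := {f : G ⧸ N → G //
    (∀ q, f q ∈ Subgroup.centralizer (N : Set G) ⊓ N) ∧
    ∀ g h : G, f (QuotientGroup.mk (g * h)) =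
      h⁻¹ * f (QuotientGroup.mk g) * h * f (QuotientGroup.mk h)}

/-- Automorphisms fixing `N` pointwise and trivial mod `N`. -/
abbrev CAut := {α : MulAut G // (∀ x ∈ N, α x = x) ∧ ∀ g : G, g⁻¹ * α g ∈ N}

variable {N}

lemma der_one (f : Der N) : f.1 (1 : G ⧸ N) = 1 := by
  have h := f.2.2 1 1
  simp only [mul_one, one_mul, inv_one, QuotientGroup.mk_one] at h
  exact left_eq_mul.mp h

/-- The automorphism `g ↦ g * f(gN)`. -/
def toAut (f : Der N) : MulAut G where
  toFun g := g * f.1 (QuotientGroup.mk g)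
  invFun g := g * (f.1 (QuotientGroup.mk g))⁻¹
  left_inv g := by
    have h : (QuotientGroup.mk (g * f.1 (QuotientGroup.mk g)) : G ⧸ N) =
        QuotientGroup.mk g := QuotientGroup.mk_mul_of_mem g (f.2.1 _).2
    dsimp only
    rw [h, mul_inv_cancel_right]
  right_inv g := by
    have h : (QuotientGroup.mk (g * (f.1 (QuotientGroup.mk g))⁻¹) : G ⧸ N) =
        QuotientGroup.mk g := QuotientGroup.mk_mul_of_mem g (N.inv_mem (f.2.1 _).2)
    dsimp only
    rw [h, inv_mul_cancel_right]
  map_mul' g h := by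
    rw [f.2.2 g h]
    group

lemma toAut_apply (f : Der N) (g : G) :
    toAut f g = g * f.1 (QuotientGroup.mk g) := rfl

lemma toAut_fix (f : Der N) : ∀ x ∈ N, toAut f x = x := by
  intro x hx
  rw [toAut_apply, (QuotientGroup.eq_one_iff x).mpr hx, der_one, mul_one]

lemma toAut_mem (f : Der N) : ∀ g : G, g⁻¹ * toAut f g ∈ N := by
  intro g
  rw [toAut_apply, ← mul_assoc, inv_mul_cancel, one_mul]
  exact (f.2.1 _).2

/-- Key fact: for `α` fixing `N` and trivial mod `N`, `g⁻¹ * α g ∈ Z(N)`. -/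
lemma aut_mem_Z (α : CAut N) (g : G) :
    g⁻¹ * (α : MulAut G) g ∈ Subgroup.centralizer (N : Set G) ⊓ N := by
  refine Subgroup.mem_inf.mpr ⟨?_, α.2.2 g⟩
  rw [Subgroup.mem_centralizer_iff]
  intro n hn
  have e : (α : MulAut G) (g * n * g⁻¹) = g * n * g⁻¹ :=
    α.2.1 _ (‹N.Normal›.conj_mem n hn g)
  have e' : g * n * g⁻¹ = (α : MulAut G) g * n * ((α : MulAut G) g)⁻¹ := by
    rw [← e, map_mul, map_mul, α.2.1 n hn, map_inv]
  calc n * (g⁻¹ * (α : MulAut G) g)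
      = g⁻¹ * (g * n * g⁻¹) * (α : MulAut G) g := by group
    _ = g⁻¹ * ((α : MulAut G) g * n * ((α : MulAut G) g)⁻¹) * (α : MulAut G) g := by rw [← e']
    _ = g⁻¹ * (α : MulAut G) g * n := by group

lemma aut_eval_congr (α : CAut N) {g o : G}
    (h : (QuotientGroup.mk g : G ⧸ N) = QuotientGroup.mk o) :
    o⁻¹ * (α : MulAut G) o = g⁻¹ * (α : MulAut G) g := by
  obtain ⟨k, hk, rfl⟩ : ∃ k ∈ N, o = g * k :=
    ⟨g⁻¹ * o, QuotientGroup.eq.mp h, by group⟩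
  have hc := Subgroup.mem_centralizer_iff.mp (Subgroup.mem_inf.mp (aut_mem_Z α g)).1
  have hcomm : k * (g⁻¹ * (α : MulAut G) g) = g⁻¹ * (α : MulAut G) g * k := hc k hk
  rw [map_mul, α.2.1 k hk]
  calc (g * k)⁻¹ * ((α : MulAut G) g * k)
      = k⁻¹ * (g⁻¹ * (α : MulAut G) g * k) := by group
    _ = k⁻¹ * (k * (g⁻¹ * (α : MulAut G) g)) := by rw [hcomm]
    _ = g⁻¹ * (α : MulAut G) g := by group

lemma aut_out_eval (α : CAut N) (g : G) :
    ((QuotientGroup.mk g : G ⧸ N).out)⁻¹ *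
      (α : MulAut G) ((QuotientGroup.mk g : G ⧸ N).out) = g⁻¹ * (α : MulAut G) g :=
  aut_eval_congr α (QuotientGroup.out_eq' _).symm

/-- The inverse map. -/
noncomputable def ofAut (α : CAut N) : Der N := by
  refine ⟨fun q => (q.out)⁻¹ * (α : MulAut G) q.out, fun q => ?_, fun g h => ?_⟩
  · exact aut_mem_Z α _
  · dsimp only
    rw [aut_out_eval α (g * h), aut_out_eval α g, aut_out_eval α h, map_mul]
    group

noncomputable def theEquiv : Der N ≃ CAut N where
  toFun f := ⟨toAut f, toAut_fix f, toAut_mem f⟩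
  invFun := ofAut
  left_inv f := by
    apply Subtype.ext
    funext q
    show (q.out)⁻¹ * toAut f q.out = f.1 q
    rw [toAut_apply, ← mul_assoc, inv_mul_cancel, one_mul, QuotientGroup.out_eq']
  right_inv α := by
    apply Subtype.ext
    apply MulEquiv.ext
    intro g
    show toAut (ofAut α) g = (α : MulAut G) g
    rw [toAut_apply]
    show g * ((QuotientGroup.mk g : G ⧸ N).out⁻¹ *
      (α : MulAut G) (QuotientGroup.mk g : G ⧸ N).out) = _
    rw [aut_out_eval α g]
    group

lemma comm_of_Z {m : G} (hm : m ∈ Subgroup.centralizer (N : Set G)) {n : G} (hn : n ∈ N) :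
    m * n = n * m := (hm n hn).symm

end Stmt14Aux

/-- Let `N` be a normal subgroup of a group `G`, and let
`Z(N) = C_G(N) ⊓ N` (as a subgroup of `G`), a `G/N`-module via conjugation.
There is a group isomorphism `φ` from the group `Z¹(G/N, Z(N))` of derivations
(crossed homomorphisms, with pointwise multiplication) to
`C_{Aut(G)}(G/N, N)` (automorphisms fixing `N` elementwise and acting trivially
mod `N`, under composition), given by `g^{φ(f)} = g·f(gN)`; and the image of
`B¹(G/N, Z(N))` (principal derivations) under `φ` is the group of inner
automorphisms of `G` induced by elements of `Z(N)`. -/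
theorem stmt14 {G : Type*} [Group G] (N : Subgroup G) [N.Normal] :
    ∃ φ : {f : G ⧸ N → G //
            (∀ q, f q ∈ Subgroup.centralizer (N : Set G) ⊓ N) ∧
            ∀ g h : G, f (QuotientGroup.mk (g * h)) =
              h⁻¹ * f (QuotientGroup.mk g) * h * f (QuotientGroup.mk h)} ≃
          {α : MulAut G // (∀ x ∈ N, α x = x) ∧ ∀ g : G, g⁻¹ * α g ∈ N},
      (∀ f (g : G), ((φ f : MulAut G) : G ≃* G) g = g * f.1 (QuotientGroup.mk g)) ∧
      (∀ f₁ f₂ (g : G), (((φ f₁ : MulAut G) * (φ f₂ : MulAut G)) : G ≃* G) g =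
        g * (f₁.1 (QuotientGroup.mk g) * f₂.1 (QuotientGroup.mk g))) ∧
      (∀ f, (∃ m ∈ Subgroup.centralizer (N : Set G) ⊓ N,
              ∀ g : G, f.1 (QuotientGroup.mk g) = m⁻¹ * (g⁻¹ * m * g)) ↔
            ∃ m ∈ Subgroup.centralizer (N : Set G) ⊓ N,
              (φ f : MulAut G) = MulAut.conj m) := by
  classical
  have hap : ∀ (f : Stmt14Aux.Der N) (g : G),
      ((Stmt14Aux.theEquiv f : MulAut G) : G ≃* G) g =
        g * f.1 (QuotientGroup.mk g) := fun _ _ => rfl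
  refine ⟨Stmt14Aux.theEquiv, hap, ?_, ?_⟩
  · intro f₁ f₂ g
    show ((Stmt14Aux.theEquiv f₁ : MulAut G) : G ≃* G)
        (((Stmt14Aux.theEquiv f₂ : MulAut G) : G ≃* G) g) = _
    rw [hap f₂ g, hap f₁]
    have hmk : (QuotientGroup.mk (g * f₂.1 (QuotientGroup.mk g)) : G ⧸ N) =
        QuotientGroup.mk g := QuotientGroup.mk_mul_of_mem g (f₂.2.1 _).2
    rw [hmk, mul_assoc,
      Stmt14Aux.comm_of_Z (f₁.2.1 (QuotientGroup.mk g)).1 (f₂.2.1 (QuotientGroup.mk g)).2]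
  · intro f
    constructor
    · rintro ⟨m, hm, hprin⟩
      refine ⟨m, hm, ?_⟩
      apply MulEquiv.ext
      intro g
      rw [hap f g, hprin g, MulAut.conj_apply]
      have hx : g⁻¹ * m * g ∈ N := by
        simpa using ‹N.Normal›.conj_mem m hm.2 g⁻¹
      have hco : Commute m⁻¹ (g⁻¹ * m * g) :=
        (show Commute m (g⁻¹ * m * g) from Stmt14Aux.comm_of_Z hm.1 hx).inv_left
      rw [hco.eq]
      group
    · rintro ⟨m, hm, hconj⟩
      refine ⟨m, hm, ?_⟩
      intro g
      have h1 : g * f.1 (QuotientGroup.mk g) = m * g * m⁻¹ := by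
        rw [← hap f g, hconj, MulAut.conj_apply]
      have hx : g⁻¹ * m * g ∈ N := by
        simpa using ‹N.Normal›.conj_mem m hm.2 g⁻¹
      have hco : Commute m⁻¹ (g⁻¹ * m * g) :=
        (show Commute m (g⁻¹ * m * g) from Stmt14Aux.comm_of_Z hm.1 hx).inv_left
      have h2 : f.1 (QuotientGroup.mk g) = g⁻¹ * (m * g * m⁻¹) := by
        rw [← h1]; group
      rw [h2, hco.eq]
      group
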